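/- Let n ≥ d ≥ 1 and let τ₁, …, τₙ ∈ ℂ^d be arbitrary (not necessarily unit) vectors. Then for every m ≥ 1, Σⱼ Σₖ |⟨τⱼ,τₖ⟩|^{2m} ≥ (1/C(d+m−1,m)) · (Σⱼ ‖τⱼ‖^{2m})². -/

import Mathlib

open Finset ComplexConjugate

private lemma sum_comm4 {α β γ δ M : Type*} [AddCommMonoid M]
    (sa : Finset α) (sb : Finset β) (sc : Finset γ) (sd : Finset δ)
    (f : α → β → γ → δ → M) :
    ∑ a ∈ sa, ∑ b ∈ sb, ∑ c ∈ sc, ∑ d ∈ sd, f a b c d =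
      ∑ c ∈ sc, ∑ d ∈ sd, ∑ a ∈ sa, ∑ b ∈ sb, f a b c d := by
  calc ∑ a ∈ sa, ∑ b ∈ sb, ∑ c ∈ sc, ∑ d ∈ sd, f a b c d
      = ∑ a ∈ sa, ∑ c ∈ sc, ∑ b ∈ sb, ∑ d ∈ sd, f a b c d :=
        Finset.sum_congr rfl fun a _ => Finset.sum_comm
    _ = ∑ c ∈ sc, ∑ a ∈ sa, ∑ b ∈ sb, ∑ d ∈ sd, f a b c d := Finset.sum_comm
    _ = ∑ c ∈ sc, ∑ a ∈ sa, ∑ d ∈ sd, ∑ b ∈ sb, f a b c d :=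
        Finset.sum_congr rfl fun c _ => Finset.sum_congr rfl fun a _ => Finset.sum_comm
    _ = ∑ c ∈ sc, ∑ d ∈ sd, ∑ a ∈ sa, ∑ b ∈ sb, f a b c d :=
        Finset.sum_congr rfl fun c _ => Finset.sum_comm

private lemma welch_key (n : ℕ) {S : Type*} [Fintype S] (w : Fin n → S → ℂ) :
    (∑ j, ∑ s : S, Complex.normSq (w j s)) ^ 2 ≤
      (Fintype.card S : ℝ) *
        ∑ j, ∑ k, Complex.normSq (∑ s : S, conj (w j s) * w k s) := by
  classical
  set B : S → S → ℂ := fun s t => ∑ j, w j s * conj (w j t) with hB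
  set G : Fin n → Fin n → ℂ := fun j k => ∑ s : S, conj (w j s) * w k s with hG
  -- complex trace identity
  have expand : ∑ s : S, ∑ t : S, B s t * B t s = ∑ j, ∑ k, G j k * G k j := by
    simp only [hB, hG, Finset.sum_mul_sum]
    rw [sum_comm4]
    refine Finset.sum_congr rfl fun j _ => Finset.sum_congr rfl fun k _ => ?_
    rw [Finset.sum_comm]
    exact Finset.sum_congr rfl fun s _ => Finset.sum_congr rfl fun t _ => by ring
  -- take real parts: ∑ normSq (B s t) = ∑ normSq (G j k)
  have hBconj : ∀ s t, conj (B s t) = B t s := by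
    intro s t; simp [hB, map_sum, mul_comm]
  have hGconj : ∀ j k, conj (G j k) = G k j := by
    intro j k; simp [hG, map_sum, mul_comm]
  have real_eq : ∑ s : S, ∑ t : S, Complex.normSq (B s t)
      = ∑ j, ∑ k, Complex.normSq (G j k) := by
    have h1 : ∀ (z : ℂ) (z' : ℂ), conj z = z' → Complex.normSq z = (z * z').re := by
      rintro z _ rfl; rw [Complex.mul_conj]; simp
    calc ∑ s : S, ∑ t : S, Complex.normSq (B s t)
        = ∑ s : S, ∑ t : S, (B s t * B t s).re := by
          exact Finset.sum_congr rfl fun s _ => Finset.sum_congr rfl fun t _ =>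
            h1 _ _ (hBconj s t)
      _ = (∑ s : S, ∑ t : S, B s t * B t s).re := by
          simp [Complex.re_sum]
      _ = (∑ j, ∑ k, G j k * G k j).re := by rw [expand]
      _ = ∑ j, ∑ k, Complex.normSq (G j k) := by
          simp only [Complex.re_sum]
          exact Finset.sum_congr rfl fun j _ => Finset.sum_congr rfl fun k _ =>
            (h1 _ _ (hGconj j k)).symm
  -- diagonal of B
  have hdiag : ∀ s : S, (B s s) = ((∑ j, Complex.normSq (w j s) : ℝ) : ℂ) := by
    intro s; simp [hB, Complex.mul_conj]
  -- main chain
  have step1 : (∑ j, ∑ s : S, Complex.normSq (w j s)) ^ 2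
      = (∑ s : S, ∑ j, Complex.normSq (w j s)) ^ 2 := by rw [Finset.sum_comm]
  rw [step1]
  calc (∑ s : S, ∑ j, Complex.normSq (w j s)) ^ 2
      ≤ (Fintype.card S : ℝ) * ∑ s : S, (∑ j, Complex.normSq (w j s)) ^ 2 := by
        simpa using sq_sum_le_card_mul_sum_sq
          (s := (Finset.univ : Finset S)) (f := fun s => ∑ j, Complex.normSq (w j s))
    _ ≤ (Fintype.card S : ℝ) * ∑ s : S, ∑ t : S, Complex.normSq (B s t) := by
        refine mul_le_mul_of_nonneg_left (Finset.sum_le_sum fun s _ => ?_) (by positivity)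
        have : (∑ j, Complex.normSq (w j s)) ^ 2 = Complex.normSq (B s s) := by
          rw [hdiag s, Complex.normSq_ofReal, sq]
        rw [this]
        exact Finset.single_le_sum (fun t _ => Complex.normSq_nonneg _) (Finset.mem_univ s)
    _ = (Fintype.card S : ℝ) * ∑ j, ∑ k, Complex.normSq (G j k) := by rw [real_eq]


/-- **Welch bound for non-normalized vectors.** For `n ≥ d ≥ 1`, arbitrary vectors
`τ₁,…,τₙ ∈ ℂ^d` and `m ≥ 1`,
`∑ⱼ∑ₖ |⟨τⱼ,τₖ⟩|^(2m) ≥ (1/C(d+m−1,m))·(∑ⱼ ‖τⱼ‖^(2m))²`. -/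
theorem welch_bound_nonnormalized (d n : ℕ) (hd : 1 ≤ d) (hdn : d ≤ n)
    (τ : Fin n → EuclideanSpace ℂ (Fin d)) (m : ℕ) (hm : 1 ≤ m) :
    (1 / ((d + m - 1).choose m : ℝ)) * (∑ j, ‖τ j‖ ^ (2 * m)) ^ 2 ≤
      ∑ j, ∑ k, ‖(inner ℂ (τ j) (τ k) : ℂ)‖ ^ (2 * m) := by
  classical
  set F : Finset (Fin d → ℕ) := piAntidiag (univ : Finset (Fin d)) m with hF
  set w : Fin n → F → ℂ := fun j s =>
    (Real.sqrt (Nat.multinomial Finset.univ s.1) : ℂ) * ∏ i, τ j i ^ (s.1 i) with hw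
  -- inner products of embedded vectors
  have hinner : ∀ j l : Fin n,
      ∑ s : F, conj (w j s) * w l s = (inner ℂ (τ j) (τ l) : ℂ) ^ m := by
    intro j l
    have hterm : ∀ s : F, conj (w j s) * w l s =
        (Nat.multinomial Finset.univ s.1 : ℂ) * ∏ i, (conj (τ j i) * τ l i) ^ (s.1 i) := by
      intro s
      simp only [hw, map_mul, map_prod, map_pow, Complex.conj_ofReal]
      rw [mul_mul_mul_comm]
      congr 1
      · rw [← Complex.ofReal_mul, Real.mul_self_sqrt (Nat.cast_nonneg _)]
        push_cast; ring
      · rw [← Finset.prod_mul_distrib]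
        exact Finset.prod_congr rfl fun i _ => (mul_pow _ _ _).symm
    rw [Finset.sum_congr rfl fun s _ => hterm s]
    have : (inner ℂ (τ j) (τ l) : ℂ) = ∑ i, conj (τ j i) * τ l i := by
      simp [PiLp.inner_apply, RCLike.inner_apply, mul_comm]
    rw [this, Finset.sum_pow_eq_sum_piAntidiag, ← hF]
    exact Finset.sum_coe_sort F (fun k => (Nat.multinomial Finset.univ k : ℂ) * ∏ i, (conj (τ j i) * τ l i) ^ k i)
  -- norms of embedded vectors
  have hnorm : ∀ j : Fin n, ∑ s : F, Complex.normSq (w j s) = ‖τ j‖ ^ (2 * m) := by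
    intro j
    have h1 : (∑ s : F, conj (w j s) * w j s).re = ∑ s : F, Complex.normSq (w j s) := by
      rw [Complex.re_sum]
      exact Finset.sum_congr rfl fun s _ => by
        rw [mul_comm, Complex.mul_conj]; simp
    rw [← h1, hinner j j, inner_self_eq_norm_sq_to_K, ← pow_mul]
    simp [← Complex.ofReal_pow]
  -- cardinality
  have hcard : (Fintype.card F : ℝ) = ((d + m - 1).choose m : ℝ) := by
    have h2 : F.card = ((univ : Finset (Fin d)).sym m).card := by
      rw [hF, ← Finset.map_sym_eq_piAntidiag, Finset.card_map]
    rw [Fintype.card_coe, h2, Finset.sym_univ]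
    norm_cast
    rw [Finset.card_univ, Sym.card_sym_eq_choose, Fintype.card_fin]
  -- combine
  have key := welch_key n w
  rw [hcard] at key
  have hset : ∀ j k : Fin n,
      Complex.normSq (∑ s : F, conj (w j s) * w k s)
        = ‖(inner ℂ (τ j) (τ k) : ℂ)‖ ^ (2 * m) := by
    intro j k
    rw [hinner j k, Complex.normSq_eq_norm_sq, norm_pow, ← pow_mul,
      mul_comm m 2]
  simp only [hset, hnorm] at key
  have hC : (0 : ℝ) < ((d + m - 1).choose m : ℝ) := by
    exact_mod_cast Nat.choose_pos (by omega)
  rw [one_div, inv_mul_le_iff₀ hC]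
  exact key
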